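/- arXiv:2512.04789 — 2 statements merged into one kernel-verified Lean document; each statement's English description precedes it below -/
import Mathlib

section
/- Let φ be an alternating m-form on ℝ^n, let g₁, g₂ be two inner products on ℝ^n, and let c₁, c₂ ≥ 0 be constants such that φ(v₁,…,v_m)² ≤ c₁·Gram_{g₁}(v₁,…,v_m) and φ(v₁,…,v_m)² ≤ c₂·Gram_{g₂}(v₁,…,v_m) for all v₁,…,v_m ∈ ℝ^n. Then for every s ∈ [0,1] and all v₁,…,v_m ∈ ℝ^n, φ(v₁,…,v_m)² ≤ ((1−s)·c₁ + s·c₂)·Gram_{(1−s)g₁+s g₂}(v₁,…,v_m). (In other words, the squared comass of φ with respect to (1−s)g₁+s g₂ is at most (1−s) times its squared comass with respect to g₁ plus s times its squared comass with respect to g₂.) -/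
/-- The Gram determinant of the vectors `v 0, …, v (m-1)` with respect to a
pairing `g` on `ℝ^n`. -/
noncomputable def gram {n m : ℕ} (g : (Fin n → ℝ) → (Fin n → ℝ) → ℝ)
    (v : Fin m → (Fin n → ℝ)) : ℝ :=
  (Matrix.of fun i j => g (v i) (v j)).det

/-- `g` is an inner product on `ℝ^n`: a symmetric bilinear form which is
positive definite. -/
def IsInnerProduct {n : ℕ} (g : (Fin n → ℝ) → (Fin n → ℝ) → ℝ) : Prop :=
  (∀ x y, g x y = g y x) ∧ (∀ x, IsLinearMap ℝ (g x)) ∧ ∀ v, v ≠ 0 → 0 < g v v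


open Matrix Finset

section aux

variable {k : ℕ}

lemma psd_det_nonneg {A : Matrix (Fin k) (Fin k) ℝ} (hA : A.PosSemidef) : 0 ≤ A.det := by
  have := hA.1.det_eq_prod_eigenvalues
  simp only [RCLike.ofReal_real_eq_id, id_eq] at this
  rw [this]
  exact Finset.prod_nonneg fun i _ => hA.eigenvalues_nonneg i

lemma det_one_combo {M : Matrix (Fin k) (Fin k) ℝ} (hM : M.PosDef)
    {s : ℝ} (hs0 : 0 ≤ s) (hs1 : s ≤ 1) :
    M.det ^ s ≤ ((1 - s) • (1 : Matrix (Fin k) (Fin k) ℝ) + s • M).det := by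
  have hH : M.IsHermitian := hM.1
  set U : Matrix (Fin k) (Fin k) ℝ := (hH.eigenvectorUnitary : Matrix (Fin k) (Fin k) ℝ) with hU
  have hUU : U * star U = 1 := (Matrix.mem_unitaryGroup_iff).mp hH.eigenvectorUnitary.2
  have hsp : M = U * Matrix.diagonal (fun i => hH.eigenvalues i) * star U := by
    have := hH.spectral_theorem
    simpa using this
  have hdiag : ((1 - s) • (1 : Matrix (Fin k) (Fin k) ℝ) + s • M)
      = U * Matrix.diagonal (fun i => (1 - s) + s * hH.eigenvalues i) * star U := by
    have h2 : ((1 - s) • (1 : Matrix (Fin k) (Fin k) ℝ) + s • M)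
        = U * ((1 - s) • 1 + s • Matrix.diagonal fun i => hH.eigenvalues i) * star U := by
      rw [Matrix.mul_add, Matrix.add_mul, Matrix.mul_smul, Matrix.smul_mul, mul_one,
        Matrix.mul_smul, Matrix.smul_mul, hUU, ← hsp]
    rw [h2]
    congr 2
    ext i j
    rcases eq_or_ne i j with rfl | h
    · simp [Matrix.diagonal_apply_eq, Matrix.one_apply_eq]
    · simp [Matrix.diagonal_apply_ne _ h, Matrix.one_apply_ne h]
  have hconj : ∀ f : Fin k → ℝ, (U * Matrix.diagonal f * star U).det = (Matrix.diagonal f).det := by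
    intro f
    rw [Matrix.det_mul, Matrix.det_mul]
    have h1 : U.det * (star U).det = 1 := by rw [← Matrix.det_mul, hUU, Matrix.det_one]
    calc U.det * (Matrix.diagonal f).det * (star U).det
        = (Matrix.diagonal f).det * (U.det * (star U).det) := by ring
      _ = (Matrix.diagonal f).det := by rw [h1, mul_one]
  have hdetM : M.det = ∏ i, hH.eigenvalues i := by
    have := hH.det_eq_prod_eigenvalues
    simpa using this
  rw [hdiag, hconj, Matrix.det_diagonal, hdetM]
  have hev : ∀ i, 0 < hH.eigenvalues i := hM.eigenvalues_pos
  rw [← Real.finset_prod_rpow Finset.univ _ (fun i _ => (hev i).le) s]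
  refine Finset.prod_le_prod (fun i _ => Real.rpow_nonneg (hev i).le s) (fun i _ => ?_)
  have := Real.geom_mean_le_arith_mean2_weighted (sub_nonneg.2 hs1) hs0 zero_le_one (hev i).le
    (by ring)
  simpa using this

end aux

section combo
variable {k : ℕ}

lemma det_combo {A B : Matrix (Fin k) (Fin k) ℝ} (hA : A.PosDef) (hB : B.PosDef)
    {s : ℝ} (hs0 : 0 ≤ s) (hs1 : s ≤ 1) :
    A.det ^ (1 - s) * B.det ^ s ≤ ((1 - s) • A + s • B).det := by
  have ha : (0:ℝ) < A.det := hA.det_pos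
  have hb : (0:ℝ) < B.det := hB.det_pos
  obtain ⟨C, hC, hCC⟩ : ∃ C : Matrix (Fin k) (Fin k) ℝ, C.PosSemidef ∧ C * C = A :=
    by open scoped MatrixOrder in exact ⟨CFC.sqrt A, (CFC.sqrt_nonneg A).posSemidef,
      CFC.sqrt_mul_sqrt_self A hA.posSemidef.nonneg⟩
  have hdetC : 0 < C.det := by
    have h2 : C.det * C.det = A.det := by rw [← Matrix.det_mul, hCC]
    have h0 : 0 ≤ C.det := psd_det_nonneg hC
    nlinarith
  have hCu : IsUnit C.det := hdetC.ne'.isUnit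
  have hCi : C * C⁻¹ = 1 := Matrix.mul_nonsing_inv C hCu
  have hCi' : C⁻¹ * C = 1 := Matrix.nonsing_inv_mul C hCu
  have hCih : (C⁻¹)ᴴ = C⁻¹ := by rw [Matrix.conjTranspose_nonsing_inv, hC.1]
  have hM : (C⁻¹ * B * C⁻¹).PosDef := by
    refine Matrix.PosDef.of_dotProduct_mulVec_pos ?_ ?_
    · have hh : ((C⁻¹)ᴴ * B * C⁻¹).IsHermitian :=
        Matrix.isHermitian_conjTranspose_mul_mul _ hB.1
      rw [hCih] at hh
      exact hh
    · intro x hx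
      have hx' : C⁻¹ *ᵥ x ≠ 0 := by
        intro h0
        apply hx
        have := congrArg (fun y => C *ᵥ y) h0
        simpa [Matrix.mulVec_mulVec, hCi] using this
      have hpos := hB.dotProduct_mulVec_pos hx'
      have e1 : star x ⬝ᵥ ((C⁻¹ * B * C⁻¹) *ᵥ x)
          = star (C⁻¹ *ᵥ x) ⬝ᵥ (B *ᵥ (C⁻¹ *ᵥ x)) := by
        rw [star_mulVec, hCih, ← Matrix.mulVec_mulVec, ← Matrix.mulVec_mulVec,
          Matrix.dotProduct_mulVec]
      rw [e1]
      exact hpos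
  have hkey : (1 - s) • A + s • B = C * ((1 - s) • 1 + s • (C⁻¹ * B * C⁻¹)) * C := by
    rw [Matrix.mul_add, Matrix.add_mul, Matrix.mul_smul, Matrix.smul_mul, mul_one,
      Matrix.mul_smul, Matrix.smul_mul, hCC]
    congr 2
    symm
    calc C * (C⁻¹ * B * C⁻¹) * C = (C * C⁻¹) * B * (C⁻¹ * C) := by
          simp only [Matrix.mul_assoc]
      _ = B := by rw [hCi, hCi', one_mul, mul_one]
  have hdetM : (C⁻¹ * B * C⁻¹).det = B.det / A.det := by
    rw [Matrix.det_mul, Matrix.det_mul, Matrix.det_nonsing_inv, ← hCC, Matrix.det_mul]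
    field_simp
    rw [← mul_pow, Ring.inverse_mul_cancel _ hCu, one_pow]
  have h1 : (C⁻¹ * B * C⁻¹).det ^ s
      ≤ ((1 - s) • (1 : Matrix (Fin k) (Fin k) ℝ) + s • (C⁻¹ * B * C⁻¹)).det :=
    det_one_combo hM hs0 hs1
  have h2 : ((1 - s) • A + s • B).det
      = A.det * ((1 - s) • (1 : Matrix (Fin k) (Fin k) ℝ) + s • (C⁻¹ * B * C⁻¹)).det := by
    rw [hkey, Matrix.det_mul, Matrix.det_mul, ← hCC, Matrix.det_mul]
    ring
  have h3 : A.det ^ (1 - s) * B.det ^ s = A.det * (C⁻¹ * B * C⁻¹).det ^ s := by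
    rw [hdetM, Real.div_rpow hb.le ha.le, Real.rpow_sub ha, Real.rpow_one]
    field_simp
  rw [h2, h3]
  exact mul_le_mul_of_nonneg_left h1 ha.le

end combo

section gramlem
variable {n m : ℕ} {g : (Fin n → ℝ) → (Fin n → ℝ) → ℝ}

lemma gram_quadratic (hg : IsInnerProduct g) (v : Fin m → (Fin n → ℝ)) (x : Fin m → ℝ) :
    star x ⬝ᵥ ((Matrix.of fun i j => g (v i) (v j)) *ᵥ x)
      = g (∑ i, x i • v i) (∑ i, x i • v i) := by
  obtain ⟨hsymm, hlin, hpos⟩ := hg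
  have hb : ∀ w, g w (∑ i, x i • v i) = ∑ i, x i * g w (v i) := by
    intro w
    have h := map_sum (IsLinearMap.mk' (g w) (hlin w)) (fun i => x i • v i) Finset.univ
    simp only [IsLinearMap.mk'_apply] at h
    rw [h]
    refine Finset.sum_congr rfl fun i _ => ?_
    have h2 := (hlin w).map_smul (x i) (v i)
    rw [h2, smul_eq_mul]
  have hrow : ∀ i, ((Matrix.of fun i j => g (v i) (v j)) *ᵥ x) i
      = g (v i) (∑ j, x j • v j) := by
    intro i
    rw [hb (v i)]
    simp [Matrix.mulVec, dotProduct, mul_comm]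
  calc star x ⬝ᵥ ((Matrix.of fun i j => g (v i) (v j)) *ᵥ x)
      = ∑ i, x i * g (v i) (∑ j, x j • v j) := by
        simp [dotProduct, hrow]
    _ = ∑ i, x i * g (∑ j, x j • v j) (v i) :=
        Finset.sum_congr rfl fun i _ => by rw [hsymm]
    _ = g (∑ j, x j • v j) (∑ i, x i • v i) := (hb _).symm

lemma gram_isHermitian (hg : IsInnerProduct g) (v : Fin m → (Fin n → ℝ)) :
    (Matrix.of fun i j => g (v i) (v j)).IsHermitian := by
  show _ᴴ = _
  ext i j
  simp only [Matrix.conjTranspose_apply, Matrix.of_apply, star_trivial]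
  exact hg.1 _ _

lemma ip_self_nonneg (hg : IsInnerProduct g) (w : Fin n → ℝ) : 0 ≤ g w w := by
  rcases eq_or_ne w 0 with rfl | hw
  · rw [(hg.2.1 0).map_zero]
  · exact (hg.2.2 w hw).le

lemma gram_posSemidef (hg : IsInnerProduct g) (v : Fin m → (Fin n → ℝ)) :
    (Matrix.of fun i j => g (v i) (v j)).PosSemidef := by
  refine Matrix.PosSemidef.of_dotProduct_mulVec_nonneg (gram_isHermitian hg v) fun x => ?_
  rw [gram_quadratic hg v x]
  exact ip_self_nonneg hg _

lemma gram_posDef (hg : IsInnerProduct g) {v : Fin m → (Fin n → ℝ)}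
    (hv : LinearIndependent ℝ v) :
    (Matrix.of fun i j => g (v i) (v j)).PosDef := by
  refine Matrix.PosDef.of_dotProduct_mulVec_pos (gram_isHermitian hg v) fun x hx => ?_
  rw [gram_quadratic hg v x]
  refine hg.2.2 _ fun h0 => hx ?_
  have := Fintype.linearIndependent_iff.mp hv x h0
  funext i
  exact this i

lemma combo_inner {g₁ g₂ : (Fin n → ℝ) → (Fin n → ℝ) → ℝ} (hg₁ : IsInnerProduct g₁)
    (hg₂ : IsInnerProduct g₂) {s : ℝ} (hs0 : 0 ≤ s) (hs1 : s ≤ 1) :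
    IsInnerProduct (fun x y => (1 - s) * g₁ x y + s * g₂ x y) := by
  refine ⟨fun x y => by dsimp only; rw [hg₁.1 x y, hg₂.1 x y], fun x => ?_, fun w hw => ?_⟩
  · constructor
    · intro y z
      dsimp only
      rw [(hg₁.2.1 x).map_add, (hg₂.2.1 x).map_add]; ring
    · intro c y
      dsimp only
      rw [(hg₁.2.1 x).map_smul, (hg₂.2.1 x).map_smul, smul_eq_mul, smul_eq_mul, smul_eq_mul]
      ring
  · rcases hs1.lt_or_eq with h | rfl
    · exact add_pos_of_pos_of_nonneg (mul_pos (by linarith) (hg₁.2.2 w hw))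
        (mul_nonneg hs0 (ip_self_nonneg hg₂ w))
    · simpa using hg₂.2.2 w hw

end gramlem


/-- If the squared comass of an alternating `m`-form `φ` with respect to inner
products `g₁`, `g₂` is at most `c₁`, `c₂` respectively, then its squared comass
with respect to `(1-s)g₁ + s g₂` is at most `(1-s)c₁ + s c₂` for `s ∈ [0,1]`. -/
theorem stmt1 {n m : ℕ} (φ : (Fin n → ℝ) [⋀^Fin m]→ₗ[ℝ] ℝ)
    (g₁ g₂ : (Fin n → ℝ) → (Fin n → ℝ) → ℝ)
    (hg₁ : IsInnerProduct g₁) (hg₂ : IsInnerProduct g₂)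
    (c₁ c₂ : ℝ) (hc₁0 : 0 ≤ c₁) (hc₂0 : 0 ≤ c₂)
    (hc₁ : ∀ v : Fin m → (Fin n → ℝ), (φ v) ^ 2 ≤ c₁ * gram g₁ v)
    (hc₂ : ∀ v : Fin m → (Fin n → ℝ), (φ v) ^ 2 ≤ c₂ * gram g₂ v)
    (s : ℝ) (hs : s ∈ Set.Icc (0 : ℝ) 1) :
    ∀ v : Fin m → (Fin n → ℝ),
      (φ v) ^ 2 ≤ ((1 - s) * c₁ + s * c₂) *
        gram (fun x y => (1 - s) * g₁ x y + s * g₂ x y) v := by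
  obtain ⟨hs0, hs1⟩ := hs
  intro v
  have hgcip : IsInnerProduct (fun x y => (1 - s) * g₁ x y + s * g₂ x y) :=
    combo_inner hg₁ hg₂ hs0 hs1
  have hRHS0 : 0 ≤ gram (fun x y => (1 - s) * g₁ x y + s * g₂ x y) v :=
    psd_det_nonneg (gram_posSemidef hgcip v)
  have hcoef : 0 ≤ (1 - s) * c₁ + s * c₂ :=
    add_nonneg (mul_nonneg (by linarith) hc₁0) (mul_nonneg hs0 hc₂0)
  by_cases hφ : φ v = 0
  · rw [hφ]
    simpa using mul_nonneg hcoef hRHS0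
  · have hv : LinearIndependent ℝ v := by
      by_contra h
      exact hφ (φ.map_linearDependent v h)
    have hA := gram_posDef hg₁ hv
    have hB := gram_posDef hg₂ hv
    have ha : 0 < gram g₁ v := hA.det_pos
    have hb : 0 < gram g₂ v := hB.det_pos
    have hmateq : gram (fun x y => (1 - s) * g₁ x y + s * g₂ x y) v
        = ((1 - s) • (Matrix.of fun i j => g₁ (v i) (v j))
            + s • (Matrix.of fun i j => g₂ (v i) (v j))).det := by
      show Matrix.det _ = _
      congr 1
    have hkey : gram g₁ v ^ (1 - s) * gram g₂ v ^ s
        ≤ ((1 - s) • (Matrix.of fun i j => g₁ (v i) (v j))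
            + s • (Matrix.of fun i j => g₂ (v i) (v j))).det := det_combo hA hB hs0 hs1
    have hφ2 : (0:ℝ) < φ v ^ 2 := by positivity
    calc (φ v) ^ 2 = ((φ v) ^ 2) ^ (1 - s) * ((φ v) ^ 2) ^ s := by
          rw [← Real.rpow_add hφ2, sub_add_cancel, Real.rpow_one]
      _ ≤ (c₁ * gram g₁ v) ^ (1 - s) * (c₂ * gram g₂ v) ^ s :=
          mul_le_mul (Real.rpow_le_rpow (sq_nonneg _) (hc₁ v) (by linarith))
            (Real.rpow_le_rpow (sq_nonneg _) (hc₂ v) hs0)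
            (Real.rpow_nonneg (sq_nonneg _) _)
            (Real.rpow_nonneg (mul_nonneg hc₁0 ha.le) _)
      _ = (c₁ ^ (1 - s) * c₂ ^ s) * (gram g₁ v ^ (1 - s) * gram g₂ v ^ s) := by
          rw [Real.mul_rpow hc₁0 ha.le, Real.mul_rpow hc₂0 hb.le]; ring
      _ ≤ ((1 - s) * c₁ + s * c₂) * (((1 - s) • (Matrix.of fun i j => g₁ (v i) (v j))
            + s • (Matrix.of fun i j => g₂ (v i) (v j))).det) :=
          mul_le_mul (Real.geom_mean_le_arith_mean2_weighted (by linarith) hs0 hc₁0 hc₂0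
              (by ring)) hkey
            (mul_nonneg (Real.rpow_nonneg ha.le _) (Real.rpow_nonneg hb.le _)) hcoef
      _ = ((1 - s) * c₁ + s * c₂) * gram (fun x y => (1 - s) * g₁ x y + s * g₂ x y) v := by
          rw [hmateq]
end

section
/- Let φ be an alternating m-form on ℝ^n and let g₁, g₂ be two inner products on ℝ^n with respect to both of which φ has comass at most 1. Suppose v₁,…,v_m ∈ ℝ^n satisfy φ(v₁,…,v_m) = 1 and Gram_{g₁}(v₁,…,v_m) = Gram_{g₂}(v₁,…,v_m) = 1. If there exists s₀ ∈ (0,1) such that Gram_{(1−s₀)g₁+s₀g₂}(v₁,…,v_m) = 1, then g₁(vᵢ,vⱼ) = g₂(vᵢ,vⱼ) for all i, j ∈ {1,…,m}, and consequently Gram_{(1−s)g₁+s g₂}(v₁,…,v_m) = 1 for every s ∈ [0,1]. -/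
open Matrix

open Finset in
lemma aux_scalar {m : ℕ} (lam : Fin m → ℝ) (hpos : ∀ i, 0 < lam i)
    (hprod : ∏ i, lam i = 1) {s : ℝ} (hs0 : 0 < s) (hs1 : s < 1)
    (hmixp : ∏ i, (1 - s + s * lam i) = 1) : ∀ i, lam i = 1 := by
  have hfac : ∀ i, 0 < 1 - s + s * lam i := fun i => by nlinarith [hpos i]
  have hle : ∀ i, s * Real.log (lam i) ≤ Real.log (1 - s + s * lam i) := by
    intro i
    have h := strictConcaveOn_log_Ioi.concaveOn.2 (Set.mem_Ioi.mpr one_pos)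
      (Set.mem_Ioi.mpr (hpos i)) (by linarith : (0:ℝ) ≤ 1 - s) hs0.le (by ring)
    simpa [smul_eq_mul, Real.log_one] using h
  have hsum1 : ∑ i, Real.log (1 - s + s * lam i) = 0 := by
    rw [← Real.log_prod (fun i _ => (hfac i).ne'), hmixp, Real.log_one]
  have hsum2 : ∑ i, s * Real.log (lam i) = 0 := by
    rw [← Finset.mul_sum, ← Real.log_prod (fun i _ => (hpos i).ne'), hprod,
      Real.log_one, mul_zero]
  intro i
  by_contra hne
  have hstrict : s * Real.log (lam i) < Real.log (1 - s + s * lam i) := by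
    have h := strictConcaveOn_log_Ioi.2 (Set.mem_Ioi.mpr one_pos)
      (Set.mem_Ioi.mpr (hpos i)) (Ne.symm hne) (by linarith : (0:ℝ) < 1 - s) hs0 (by ring)
    simpa [smul_eq_mul, Real.log_one] using h
  have h := Finset.sum_lt_sum (fun j _ => hle j) ⟨i, Finset.mem_univ i, hstrict⟩
  rw [hsum1, hsum2] at h
  exact lt_irrefl 0 h

lemma aux_det_affine {m : ℕ} {M : Matrix (Fin m) (Fin m) ℝ} (hM : M.IsHermitian) (s : ℝ) :
    ((1 - s) • (1 : Matrix (Fin m) (Fin m) ℝ) + s • M).det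
      = ∏ i, (1 - s + s * hM.eigenvalues i) := by
  set U : Matrix (Fin m) (Fin m) ℝ := (hM.eigenvectorUnitary : Matrix (Fin m) (Fin m) ℝ)
    with hUdef
  have hU : U * star U = 1 := (Matrix.mem_unitaryGroup_iff).mp hM.eigenvectorUnitary.2
  have hU' : star U * U = 1 := (Matrix.mem_unitaryGroup_iff').mp hM.eigenvectorUnitary.2
  have hdiag : Matrix.diagonal (fun i => 1 - s + s * hM.eigenvalues i)
      = (1 - s) • (1 : Matrix (Fin m) (Fin m) ℝ) + s • Matrix.diagonal hM.eigenvalues := by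
    ext i j
    by_cases h : i = j <;>
      simp [h, Matrix.diagonal_apply, Matrix.one_apply, smul_eq_mul]
  have hMdiag : M = U * Matrix.diagonal hM.eigenvalues * star U := by
    conv_lhs => rw [hM.spectral_theorem]
    simp [RCLike.ofReal_real_eq_id]
    rfl
  have key : (1 - s) • (1 : Matrix (Fin m) (Fin m) ℝ) + s • M
      = U * Matrix.diagonal (fun i => 1 - s + s * hM.eigenvalues i) * star U := by
    rw [hdiag, Matrix.mul_add, Matrix.add_mul, Matrix.mul_smul, Matrix.smul_mul,
      Matrix.mul_smul, Matrix.smul_mul, Matrix.mul_one, hU, ← hMdiag]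
  rw [key, Matrix.det_mul, Matrix.det_mul, mul_comm, ← mul_assoc, ← Matrix.det_mul,
    hU', Matrix.det_one, one_mul, Matrix.det_diagonal]

lemma aux_posdef {m : ℕ} {M : Matrix (Fin m) (Fin m) ℝ} (h : M.PosSemidef)
    (hdet : M.det ≠ 0) : M.PosDef := by
  refine Matrix.PosDef.of_dotProduct_mulVec_pos h.1 fun x hx => ?_
  rcases lt_or_eq_of_le (h.dotProduct_mulVec_nonneg x) with hlt | heq
  · exact hlt
  · exact absurd (Matrix.eq_zero_of_mulVec_eq_zero hdet
      ((h.dotProduct_mulVec_zero_iff x).mp heq.symm)) hx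

open scoped MatrixOrder in
lemma aux_key {m : ℕ} {A B : Matrix (Fin m) (Fin m) ℝ} (hA : A.PosDef) (hB : B.PosDef)
    (hdA : A.det = 1) (hdB : B.det = 1) {s : ℝ} (hs0 : 0 < s) (hs1 : s < 1)
    (hdet : ((1 - s) • A + s • B).det = 1) : A = B := by
  have hSsd := hA.posSemidef
  set S := CFC.sqrt A with hSdef
  have hSS : S * S = A := CFC.sqrt_mul_sqrt_self A hSsd.nonneg
  have hdetS : S.det * S.det = 1 := by rw [← Matrix.det_mul, hSS, hdA]
  have hdetS0 : S.det ≠ 0 := fun h => by rw [h, mul_zero] at hdetS; exact one_ne_zero hdetS.symm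
  have hST : S * S⁻¹ = 1 := Matrix.mul_nonsing_inv S (isUnit_iff_ne_zero.mpr hdetS0)
  have hTS : S⁻¹ * S = 1 := Matrix.nonsing_inv_mul S (isUnit_iff_ne_zero.mpr hdetS0)
  have hSherm : S.IsHermitian := (Matrix.nonneg_iff_posSemidef.mp (CFC.sqrt_nonneg A)).1
  have hTherm : (S⁻¹).IsHermitian := hSherm.inv
  set M := S⁻¹ * B * S⁻¹ with hMdef
  have hMsd : M.PosSemidef := by
    have h := hB.posSemidef.conjTranspose_mul_mul_same (B := S⁻¹)
    rwa [hTherm.eq] at h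
  have hdetT : (S⁻¹).det = (S.det)⁻¹ := by
    rw [Matrix.det_nonsing_inv, Ring.inverse_eq_inv]
  have hdetM : M.det = 1 := by
    rw [hMdef, Matrix.det_mul, Matrix.det_mul, hdB, hdetT]
    field_simp
    linarith [hdetS]
  have hMpd : M.PosDef := aux_posdef hMsd (by rw [hdetM]; exact one_ne_zero)
  have hdecomp : (1 - s) • A + s • B
      = S * ((1 - s) • (1 : Matrix (Fin m) (Fin m) ℝ) + s • M) * S := by
    rw [Matrix.mul_add, Matrix.add_mul, Matrix.mul_smul, Matrix.smul_mul, Matrix.mul_smul,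
      Matrix.smul_mul, Matrix.mul_one, hSS, hMdef]
    congr 2
    calc B = (S * S⁻¹) * B * (S⁻¹ * S) := by rw [hST, hTS, Matrix.one_mul, Matrix.mul_one]
      _ = S * (S⁻¹ * B * S⁻¹) * S := by simp only [Matrix.mul_assoc]
  have hdmix : ((1 - s) • (1 : Matrix (Fin m) (Fin m) ℝ) + s • M).det = 1 := by
    have h := hdet
    rw [hdecomp, Matrix.det_mul, Matrix.det_mul] at h
    have h2 : S.det * S.det * ((1 - s) • (1 : Matrix (Fin m) (Fin m) ℝ) + s • M).det = 1 := by
      linarith [h]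
    rw [hdetS, one_mul] at h2
    exact h2
  have hlam := aux_scalar hMpd.1.eigenvalues hMpd.eigenvalues_pos
    (by have := hMpd.1.det_eq_prod_eigenvalues; rw [hdetM] at this; exact_mod_cast this.symm)
    hs0 hs1 (by rw [← aux_det_affine hMpd.1 s]; exact hdmix)
  have hM1 : M = 1 := by
    have h := hMpd.1.spectral_theorem
    rw [h]
    have hfun : (RCLike.ofReal ∘ hMpd.1.eigenvalues : Fin m → ℝ) = fun _ => 1 := by
      funext i; simp [Function.comp, hlam i, RCLike.ofReal_real_eq_id]
    have hdiag1 : Matrix.diagonal (RCLike.ofReal ∘ hMpd.1.eigenvalues)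
        = (1 : Matrix (Fin m) (Fin m) ℝ) := by
      rw [hfun]; exact Matrix.diagonal_one
    rw [hdiag1, map_one]
  have hBSS : B = S * M * S := by
    rw [hMdef]
    calc B = (S * S⁻¹) * B * (S⁻¹ * S) := by rw [hST, hTS, Matrix.one_mul, Matrix.mul_one]
      _ = S * (S⁻¹ * B * S⁻¹) * S := by simp only [Matrix.mul_assoc]
  rw [hBSS, hM1, Matrix.mul_one, hSS]

lemma aux_lin_sum {n m : ℕ} {g : (Fin n → ℝ) → (Fin n → ℝ) → ℝ}
    (hlin : ∀ x, IsLinearMap ℝ (g x)) (u : Fin n → ℝ) (x : Fin m → ℝ)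
    (v : Fin m → (Fin n → ℝ)) :
    g u (∑ j, x j • v j) = ∑ j, x j * g u (v j) := by
  have h1 : g u (∑ j, x j • v j) = ∑ j, g u (x j • v j) :=
    map_sum (IsLinearMap.mk' (g u) (hlin u)) _ _
  rw [h1]
  exact Finset.sum_congr rfl fun j _ => (hlin u).map_smul (x j) (v j)

lemma aux_gram_psd {n m : ℕ} {g : (Fin n → ℝ) → (Fin n → ℝ) → ℝ} (hg : IsInnerProduct g)
    (v : Fin m → (Fin n → ℝ)) :
    (Matrix.of fun i j => g (v i) (v j)).PosSemidef := by
  obtain ⟨hsymm, hlin, hpos⟩ := hg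
  set A : Matrix (Fin m) (Fin m) ℝ := Matrix.of fun i j => g (v i) (v j) with hAdef
  have hAherm : A.IsHermitian := by
    ext i j
    simp [hAdef, Matrix.conjTranspose_apply, hsymm (v j) (v i)]
  refine Matrix.PosSemidef.of_dotProduct_mulVec_nonneg hAherm fun x => ?_
  set w : Fin n → ℝ := ∑ j, x j • v j with hw
  have hmv : A *ᵥ x = fun i => g (v i) w := by
    funext i
    rw [hw, aux_lin_sum hlin (v i) x v]
    simp [Matrix.mulVec, dotProduct, hAdef, mul_comm]
  have hdp : star x ⬝ᵥ (A *ᵥ x) = g w w := by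
    rw [hmv, hw, aux_lin_sum hlin w x v]
    simp only [dotProduct, star_trivial]
    refine Finset.sum_congr rfl fun i _ => ?_
    rw [hsymm w (v i)]
  rw [hdp]
  rcases eq_or_ne w 0 with hw0 | hw0
  · rw [hw0, (hlin 0).map_zero]
  · exact (hpos w hw0).le

/-- Equality case in the gluing of metrics: if `φ` has comass at most one with
respect to both `g₁` and `g₂`, calibrates `v` with Gram determinant one for
both metrics, and the Gram determinant is still one for some intermediate
metric `(1-s₀)g₁ + s₀g₂` with `s₀ ∈ (0,1)`, then `g₁` and `g₂` agree on the
vectors `v i`, and the Gram determinant is one for all `s ∈ [0,1]`. -/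
theorem stmt3 {n m : ℕ} (φ : (Fin n → ℝ) [⋀^Fin m]→ₗ[ℝ] ℝ)
    (g₁ g₂ : (Fin n → ℝ) → (Fin n → ℝ) → ℝ)
    (hg₁ : IsInnerProduct g₁) (hg₂ : IsInnerProduct g₂)
    (hc₁ : ∀ v : Fin m → (Fin n → ℝ), (φ v) ^ 2 ≤ gram g₁ v)
    (hc₂ : ∀ v : Fin m → (Fin n → ℝ), (φ v) ^ 2 ≤ gram g₂ v)
    (v : Fin m → (Fin n → ℝ)) (hφv : φ v = 1)
    (hgram₁ : gram g₁ v = 1) (hgram₂ : gram g₂ v = 1)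
    (s₀ : ℝ) (hs₀ : s₀ ∈ Set.Ioo (0 : ℝ) 1)
    (hmix : gram (fun x y => (1 - s₀) * g₁ x y + s₀ * g₂ x y) v = 1) :
    (∀ i j : Fin m, g₁ (v i) (v j) = g₂ (v i) (v j)) ∧
      ∀ s ∈ Set.Icc (0 : ℝ) 1,
        gram (fun x y => (1 - s) * g₁ x y + s * g₂ x y) v = 1 := by
  unfold _root_.gram at hgram₁ hgram₂ hmix ⊢
  set A : Matrix (Fin m) (Fin m) ℝ := Matrix.of fun i j => g₁ (v i) (v j) with hAdef
  set B : Matrix (Fin m) (Fin m) ℝ := Matrix.of fun i j => g₂ (v i) (v j) with hBdef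
  have hApd : A.PosDef := aux_posdef (aux_gram_psd hg₁ v) (by rw [hgram₁]; exact one_ne_zero)
  have hBpd : B.PosDef := aux_posdef (aux_gram_psd hg₂ v) (by rw [hgram₂]; exact one_ne_zero)
  have hmixmat : ∀ s : ℝ,
      (Matrix.of fun i j => (1 - s) * g₁ (v i) (v j) + s * g₂ (v i) (v j))
        = (1 - s) • A + s • B := by
    intro s
    ext i j
    simp [hAdef, hBdef, Matrix.add_apply, Matrix.smul_apply, smul_eq_mul]
  have hdet : ((1 - s₀) • A + s₀ • B).det = 1 := by
    rw [← hmixmat s₀]; exact hmix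
  have hAB : A = B := aux_key hApd hBpd hgram₁ hgram₂ hs₀.1 hs₀.2 hdet
  constructor
  · intro i j
    have h := congrFun (congrFun (congrArg (fun (M : Matrix (Fin m) (Fin m) ℝ) i j => M i j)
      hAB) i) j
    exact h
  · intro s _
    rw [hmixmat s, ← hAB, ← add_smul]
    norm_num [hgram₁]
end
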